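/- Let n = 2m + 1 be an odd positive integer (m ≥ 0). Then, in the polynomial ring ℝ[t], ∏_{k=0}^{m} (t − 2·cos(2kπ/n)) = ∏_{d | n} ψ_d(t), where the second product is over the positive divisors d of n. -/

import Mathlib

open scoped Real
open Polynomial

noncomputable section

/-- `ψ_d`: the minimal polynomial over ℚ of `2 cos(2π/d)`, regarded as a polynomial in `ℝ[t]`. -/
def psiR (d : ℕ) : ℝ[X] :=
  (minpoly ℚ (2 * Real.cos (2 * π / d))).map (algebraMap ℚ ℝ)

lemma exp_pow_add_inv (d j : ℕ) (hd : d ≠ 0) :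
    Complex.exp (2 * π * Complex.I / d) ^ j + (Complex.exp (2 * π * Complex.I / d) ^ j)⁻¹
      = ((2 * Real.cos (2 * π * j / d) : ℝ) : ℂ) := by
  have hdC : (d : ℂ) ≠ 0 := Nat.cast_ne_zero.2 hd
  have h1 : Complex.exp (2 * π * Complex.I / d) ^ j
      = Complex.exp (((2 * π * j / d : ℝ) : ℂ) * Complex.I) := by
    rw [← Complex.exp_nat_mul]
    congr 1
    push_cast
    field_simp
  have h2 : ((2 * Real.cos (2 * π * j / d) : ℝ) : ℂ)
      = 2 * Complex.cos ((2 * π * j / d : ℝ) : ℂ) := by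
    push_cast [Complex.ofReal_cos]
    ring
  rw [h1, ← Complex.exp_neg, ← neg_mul, h2, Complex.two_cos]

lemma isIntegral_two_cos (d j : ℕ) (hd : d ≠ 0) :
    IsIntegral ℚ (2 * Real.cos (2 * π * j / d)) := by
  have hζ := Complex.isPrimitiveRoot_exp d hd
  set u : ℂ := Complex.exp (2 * π * Complex.I / d) ^ j with hu
  have hui : IsIntegral ℚ u := ((hζ.isIntegral (Nat.pos_of_ne_zero hd)).tower_top).pow j
  have huinv : u⁻¹ = u ^ (d - 1) := by
    refine inv_eq_of_mul_eq_one_right ?_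
    rw [← pow_succ', Nat.sub_add_cancel (Nat.one_le_iff_ne_zero.2 hd), hu, ← pow_mul,
      mul_comm j d, pow_mul, hζ.pow_eq_one, one_pow]
  have hsum : IsIntegral ℚ (u + u⁻¹) := hui.add (huinv ▸ hui.pow _)
  have key : algebraMap ℝ ℂ (2 * Real.cos (2 * π * j / d)) = u + u⁻¹ :=
    (exp_pow_add_inv d j hd).symm
  rw [← isIntegral_algebraMap_iff (R := ℚ) (algebraMap ℝ ℂ).injective, key]
  exact hsum

lemma two_cos_eq (d : ℕ) : 2 * Real.cos (2 * π / d) = 2 * Real.cos (2 * π * (1:ℕ) / d) := by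
  norm_num

lemma psiR_monic (d : ℕ) (hd : d ≠ 0) : (psiR d).Monic := by
  have h := isIntegral_two_cos d 1 hd
  rw [← two_cos_eq] at h
  exact (minpoly.monic h).map _

lemma psiR_root (d j : ℕ) (hd : d ≠ 0) (hcop : Nat.Coprime j d) :
    (psiR d).IsRoot (2 * Real.cos (2 * π * j / d)) := by
  have hd0 : 0 < d := Nat.pos_of_ne_zero hd
  have hζ := Complex.isPrimitiveRoot_exp d hd
  set ζ : ℂ := Complex.exp (2 * π * Complex.I / d) with hζdef
  set b : ℝ := 2 * Real.cos (2 * π / d) with hb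
  set q : ℚ[X] := minpoly ℚ b with hq
  set s : ℕ := q.natDegree with hs
  have hbq : minpoly ℚ (algebraMap ℝ ℂ b) = q :=
    minpoly.algebraMap_eq (algebraMap ℝ ℂ).injective b
  have hbC : algebraMap ℝ ℂ b = ζ + ζ⁻¹ := by
    have h1 := exp_pow_add_inv d 1 hd
    rw [pow_one] at h1
    rw [Complex.coe_algebraMap, hb, two_cos_eq d, ← h1]
  set g : ℚ[X] := ∑ i ∈ Finset.range (s+1), C (q.coeff i) * (X^2+1)^i * X^(s-i) with hg
  have hgeval : ∀ z : ℂ, z ≠ 0 → (aeval z) g = z ^ s * (aeval (z + z⁻¹)) q := by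
    intro z hz
    have hq2 : (aeval (z + z⁻¹)) q
        = ∑ i ∈ Finset.range (s+1), algebraMap ℚ ℂ (q.coeff i) * (z+z⁻¹)^i := by
      rw [aeval_eq_sum_range]
      exact Finset.sum_congr rfl fun i _ => by rw [Algebra.smul_def]
    rw [hg, map_sum, hq2, Finset.mul_sum]
    refine Finset.sum_congr rfl fun i hi => ?_
    have hile : i ≤ s := Nat.lt_succ_iff.mp (Finset.mem_range.mp hi)
    have hz2 : z^2 + 1 = z * (z + z⁻¹) := by field_simp
    simp only [map_mul, map_pow, map_add, map_one, aeval_X, aeval_C]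
    rw [hz2, mul_pow]
    rw [show (algebraMap ℚ ℂ) (q.coeff i) * (z ^ i * (z + z⁻¹) ^ i) * z ^ (s - i)
        = (z ^ i * z ^ (s-i)) * ((algebraMap ℚ ℂ) (q.coeff i) * (z + z⁻¹) ^ i) from by ring,
      ← pow_add, Nat.add_sub_cancel' hile]
  have hζne : ζ ≠ 0 := Complex.exp_ne_zero _
  have hgζ : (aeval ζ) g = 0 := by
    rw [hgeval ζ hζne, ← hbC]
    have : (aeval (algebraMap ℝ ℂ b)) q = 0 := by rw [← hbq]; exact minpoly.aeval ℚ _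
    rw [this, mul_zero]
  have hcyc : cyclotomic d ℚ ∣ g := by
    rw [cyclotomic_eq_minpoly_rat hζ hd0]
    exact minpoly.dvd ℚ ζ hgζ
  have hζj : IsPrimitiveRoot (ζ ^ j) d := hζ.pow_of_coprime j hcop
  have hgζj : (aeval (ζ ^ j)) g = 0 := by
    obtain ⟨h, hh⟩ := hcyc
    have hr : (aeval (ζ^j)) (cyclotomic d ℚ) = 0 := by
      rw [aeval_def, ← eval_map, map_cyclotomic]
      exact hζj.isRoot_cyclotomic hd0
    rw [hh, map_mul, hr, zero_mul]
  have hzj : ζ^j ≠ 0 := pow_ne_zero _ hζne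
  have hev := hgeval (ζ^j) hzj
  rw [hgζj] at hev
  have h0 : (aeval (ζ^j + (ζ^j)⁻¹)) q = 0 := by
    rcases mul_eq_zero.mp hev.symm with h | h
    · exact absurd h (pow_ne_zero _ hzj)
    · exact h
  have hsum : ζ^j + (ζ^j)⁻¹ = algebraMap ℝ ℂ (2 * Real.cos (2 * π * j / d)) := by
    rw [Complex.coe_algebraMap]; exact exp_pow_add_inv d j hd
  rw [hsum, aeval_algebraMap_apply, map_eq_zero_iff _ (algebraMap ℝ ℂ).injective] at h0
  rw [IsRoot, psiR, eval_map, ← aeval_def]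
  exact h0

set_option synthInstance.maxHeartbeats 1000000 in
set_option maxHeartbeats 1000000 in
open IntermediateField in
lemma finrank_eq_two_mul_minpoly_natDegree {K : Type*} [Field K] [Algebra ℚ K]
    [FiniteDimensional ℚ K] (z b : K)
    (htop : IntermediateField.adjoin ℚ ({z} : Set K) = ⊤)
    (hz0 : z ≠ 0) (hb : b = z + z⁻¹)
    (hzb : z ∉ IntermediateField.adjoin ℚ ({b} : Set K)) :
    Module.finrank ℚ K = 2 * (minpoly ℚ b).natDegree := by
  set Qb : IntermediateField ℚ K := IntermediateField.adjoin ℚ {b} with hQb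
  have hbint : IsIntegral ℚ b := .of_finite ℚ b
  have hF : Module.finrank ℚ Qb = (minpoly ℚ b).natDegree :=
    IntermediateField.adjoin.finrank hbint
  haveI : FiniteDimensional Qb K := FiniteDimensional.right ℚ Qb K
  have hzint : IsIntegral Qb z := .of_finite Qb z
  have hFK : Module.finrank Qb K = (minpoly Qb z).natDegree := by
    have h1 := IntermediateField.adjoin.finrank hzint
    rwa [IntermediateField.adjoin_eq_top_of_adjoin_eq_top ℚ htop,
      IntermediateField.finrank_top'] at h1
  set b'' : Qb := IntermediateField.AdjoinSimple.gen ℚ b with hb''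
  have hb''map : algebraMap Qb K b'' = b := IntermediateField.AdjoinSimple.algebraMap_gen ℚ b
  set p : Polynomial Qb := X^2 - C b'' * X + 1 with hp
  have heq : p = X^2 + (-(C b'') * X + 1) := by rw [hp]; ring
  have hrlt : (-(C b'') * X + 1 : Polynomial Qb).degree < (2:ℕ) := by
    refine lt_of_le_of_lt (show (-(C b'') * X + 1 : Polynomial Qb).degree ≤ 1 by compute_degree) ?_
    exact_mod_cast one_lt_two
  have hpmonic : p.Monic := by
    rw [heq]
    exact Polynomial.monic_X_pow_add hrlt
  have hpdeg : p.natDegree = 2 := by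
    have hdeg : p.degree = 2 := by
      rw [heq]
      rw [degree_add_eq_left_of_degree_lt (by rw [degree_X_pow]; exact_mod_cast hrlt)]
      exact degree_X_pow 2
    exact natDegree_eq_of_degree_eq_some hdeg
  have hproot : (aeval z) p = 0 := by
    simp only [hp, map_add, map_sub, map_mul, map_pow, map_one, aeval_X, aeval_C]
    rw [hb''map, hb]
    field_simp
    ring
  have hple : (minpoly Qb z).natDegree ≤ 2 := by
    have h1 := minpoly.min Qb z hpmonic hproot
    calc (minpoly Qb z).natDegree ≤ p.natDegree := natDegree_le_natDegree h1
    _ = 2 := hpdeg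
  have hpge : 2 ≤ (minpoly Qb z).natDegree := by
    rw [minpoly.two_le_natDegree_iff hzint]
    rintro ⟨x, hx⟩
    apply hzb
    rw [← hx]
    exact x.2
  have h2 : (minpoly Qb z).natDegree = 2 := le_antisymm hple hpge
  have htower := Module.finrank_mul_finrank ℚ Qb K
  rw [hF, hFK, h2] at htower
  rw [← htower, mul_comm]

open IntermediateField in
lemma psiR_natDegree (d : ℕ) (hd3 : 3 ≤ d) : 2 * (psiR d).natDegree = Nat.totient d := by
  have hd : d ≠ 0 := by omega
  have hd0 : 0 < d := by omega
  have hζ := Complex.isPrimitiveRoot_exp d hd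
  set ζ : ℂ := Complex.exp (2 * π * Complex.I / d) with hζdef
  have hζint : IsIntegral ℚ ζ := (hζ.isIntegral hd0).tower_top
  set b : ℝ := 2 * Real.cos (2 * π / d) with hb
  have hbC : algebraMap ℝ ℂ b = ζ + ζ⁻¹ := by
    have h1 := exp_pow_add_inv d 1 hd
    rw [pow_one] at h1
    rw [Complex.coe_algebraMap, hb, two_cos_eq d, ← h1]
  have hψdeg : (psiR d).natDegree = (minpoly ℚ b).natDegree := natDegree_map _
  haveI hKfd : FiniteDimensional ℚ ℚ⟮ζ⟯ := IntermediateField.adjoin.finiteDimensional hζint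
  have hK : Module.finrank ℚ ℚ⟮ζ⟯ = Nat.totient d := by
    rw [IntermediateField.adjoin.finrank hζint, ← cyclotomic_eq_minpoly_rat hζ hd0,
      natDegree_cyclotomic]
  set ζ' : ℚ⟮ζ⟯ := IntermediateField.AdjoinSimple.gen ℚ ζ with hζ'
  have hζ'map : algebraMap ℚ⟮ζ⟯ ℂ ζ' = ζ := IntermediateField.AdjoinSimple.algebraMap_gen ℚ ζ
  have hζ'ne : ζ' ≠ 0 := by
    intro h
    have h0 : ζ = 0 := by rw [← hζ'map, h, map_zero]
    exact Complex.exp_ne_zero _ h0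
  set b' : ℚ⟮ζ⟯ := ζ' + ζ'⁻¹ with hb'
  have hmapb' : algebraMap ℚ⟮ζ⟯ ℂ b' = algebraMap ℝ ℂ b := by
    rw [hbC, hb', map_add, map_inv₀, hζ'map]
  have hminb' : minpoly ℚ b' = minpoly ℚ b := by
    rw [← minpoly.algebraMap_eq (algebraMap ℚ⟮ζ⟯ ℂ).injective b', hmapb',
      minpoly.algebraMap_eq (algebraMap ℝ ℂ).injective]
  have htop : IntermediateField.adjoin ℚ ({ζ'} : Set ℚ⟮ζ⟯) = ⊤ := by
    rw [eq_top_iff]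
    intro x _
    apply IntermediateField.algebra_adjoin_le_adjoin
    have h := (IntermediateField.adjoin.powerBasis hζint).adjoin_gen_eq_top
    rw [IntermediateField.adjoin.powerBasis_gen] at h
    rw [hζ']; exact (Algebra.eq_top_iff.mp h) x
  have hzb : ζ' ∉ IntermediateField.adjoin ℚ ({b'} : Set ℚ⟮ζ⟯) := by
    intro hmem
    have hζmem : ζ ∈ (IntermediateField.adjoin ℚ ({b'} : Set ℚ⟮ζ⟯)).map
        (IsScalarTower.toAlgHom ℚ ℚ⟮ζ⟯ ℂ) := by
      refine ⟨ζ', hmem, hζ'map⟩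
    rw [IntermediateField.adjoin_map, Set.image_singleton] at hζmem
    have him : ζ.im = 0 := by
      have hle : IntermediateField.adjoin ℚ {(IsScalarTower.toAlgHom ℚ ℚ⟮ζ⟯ ℂ) b'}
          ≤ Subfield.toIntermediateField (K := ℚ) Complex.ofRealHom.fieldRange
            (fun q => ⟨(q : ℝ), by norm_cast⟩) := by
        rw [IntermediateField.adjoin_le_iff, Set.singleton_subset_iff]
        show (IsScalarTower.toAlgHom ℚ ℚ⟮ζ⟯ ℂ) b' ∈ Complex.ofRealHom.fieldRange
        exact ⟨b, hmapb'.symm⟩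
      obtain ⟨r, hr⟩ := hle hζmem
      rw [← hr]
      rfl
    have him2 : ζ.im = Real.sin (2 * π / d) := by
      have heq : ζ = Complex.exp (((2 * π / d : ℝ) : ℂ) * Complex.I) := by
        rw [hζdef]
        congr 1
        have hdC : (d : ℂ) ≠ 0 := Nat.cast_ne_zero.2 hd
        push_cast
        field_simp
      rw [heq, Complex.exp_ofReal_mul_I_im]
    have hsin : 0 < Real.sin (2 * π / d) := by
      apply Real.sin_pos_of_pos_of_lt_pi
      · have := Real.pi_pos
        positivity
      · rw [div_lt_iff₀ (by positivity)]
        have hd3' : (3 : ℝ) ≤ d := by exact_mod_cast hd3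
        nlinarith [Real.pi_pos]
    rw [him2] at him
    linarith
  have hmain := finrank_eq_two_mul_minpoly_natDegree ζ' b' htop hζ'ne hb' hzb
  rw [hK, hminb'] at hmain
  rw [hψdeg, hmain]

lemma psiR_one_natDegree : (psiR 1).natDegree = 1 := by
  have h : 2 * Real.cos (2 * π / (1:ℕ)) = algebraMap ℚ ℝ 2 := by
    push_cast
    rw [div_one, Real.cos_two_pi]
    norm_num
  rw [psiR, natDegree_map, h, minpoly.eq_X_sub_C, natDegree_X_sub_C]

/-- For odd `n = 2m+1`, `∏_{k=0}^{m} (t − 2 cos(2kπ/n)) = ∏_{d ∣ n} ψ_d(t)` in `ℝ[t]`. -/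
theorem prod_X_sub_two_cos_eq_prod_psi (m n : ℕ) (hn : n = 2 * m + 1) :
    ∏ k ∈ Finset.range (m + 1), (X - C (2 * Real.cos (2 * k * π / n))) =
      ∏ d ∈ n.divisors, psiR d := by
  have hn0 : n ≠ 0 := by omega
  have hnR : (0:ℝ) < n := by exact_mod_cast Nat.pos_of_ne_zero hn0
  set α : ℕ → ℝ := fun k => 2 * Real.cos (2 * k * π / n) with hα
  set RHS := ∏ d ∈ n.divisors, psiR d with hRHS
  have hmemIcc : ∀ k ∈ Finset.range (m+1), 2 * (k:ℝ) * π / n ∈ Set.Icc 0 π := by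
    intro k hk
    have hk' : (k:ℝ) ≤ m := by exact_mod_cast Nat.lt_succ_iff.mp (Finset.mem_range.mp hk)
    have hπ := Real.pi_pos
    constructor
    · positivity
    · rw [div_le_iff₀ hnR]
      have : (n:ℝ) = 2 * m + 1 := by exact_mod_cast congrArg (Nat.cast : ℕ → ℝ) hn
      nlinarith
  have hinj : ∀ k1 ∈ Finset.range (m+1), ∀ k2 ∈ Finset.range (m+1), α k1 = α k2 → k1 = k2 := by
    intro k1 h1 k2 h2 he
    have hc : Real.cos (2 * (k1:ℝ) * π / n) = Real.cos (2 * (k2:ℝ) * π / n) := by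
      have : 2 * Real.cos (2 * (k1:ℝ) * π / n) = 2 * Real.cos (2 * (k2:ℝ) * π / n) := he
      linarith
    have heq := Real.injOn_cos (hmemIcc k1 h1) (hmemIcc k2 h2) hc
    have hπ := Real.pi_ne_zero
    field_simp at heq
    exact_mod_cast heq
  have hRHSmonic : RHS.Monic :=
    monic_prod_of_monic _ _ fun d hd => psiR_monic d (Nat.pos_of_mem_divisors hd).ne'
  have hroot : ∀ k ∈ Finset.range (m+1), RHS.IsRoot (α k) := by
    intro k hk
    set g := Nat.gcd k n with hg
    have hgpos : 0 < g := Nat.gcd_pos_of_pos_right k (Nat.pos_of_ne_zero hn0)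
    set d := n / g with hd
    have hdvd : d ∣ n := Nat.div_dvd_of_dvd (Nat.gcd_dvd_right k n)
    have hd0 : d ≠ 0 := by
      have : 0 < n / g := Nat.div_pos (Nat.le_of_dvd (Nat.pos_of_ne_zero hn0)
        (Nat.gcd_dvd_right k n)) hgpos
      omega
    set j := k / g with hj
    have hcop : Nat.Coprime j d := Nat.coprime_div_gcd_div_gcd hgpos
    have hkgj : g * j = k := Nat.mul_div_cancel' (Nat.gcd_dvd_left k n)
    have hngd : g * d = n := Nat.mul_div_cancel' (Nat.gcd_dvd_right k n)
    have hgR : (g:ℝ) ≠ 0 := Nat.cast_ne_zero.2 hgpos.ne'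
    have hdR : (d:ℝ) ≠ 0 := Nat.cast_ne_zero.2 hd0
    have hαeq : α k = 2 * Real.cos (2 * π * j / d) := by
      have hkR : (k:ℝ) = g * j := by exact_mod_cast hkgj.symm
      have hnRe : (n:ℝ) = g * d := by exact_mod_cast hngd.symm
      show 2 * Real.cos (2 * (k:ℝ) * π / n) = 2 * Real.cos (2 * π * j / d)
      rw [hkR, hnRe]
      congr 1
      rw [show 2*((g:ℝ)*j)*π = (2*π*j)*g by ring, show ((g:ℝ)*(d:ℝ)) = (d:ℝ)*g by ring,
        mul_div_mul_right _ _ hgR]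
    rw [hαeq]
    exact (psiR_root d j hd0 hcop).dvd
      (Finset.dvd_prod_of_mem _ (Nat.mem_divisors.mpr ⟨hdvd, hn0⟩))
  -- LHS divides RHS
  set S : Finset ℝ := (Finset.range (m+1)).image α with hS
  have hLHS : ∏ k ∈ Finset.range (m + 1), (X - C (2 * Real.cos (2 * k * π / n)))
      = ∏ a ∈ S, (X - C a) := by
    have hconv : ∏ k ∈ Finset.range (m + 1), (X - C (2 * Real.cos (2 * k * π / n)))
        = ∏ k ∈ Finset.range (m+1), (X - C (α k)) := rfl
    rw [hconv]
    exact (Finset.prod_image (f := fun a => (X:ℝ[X]) - C a) hinj).symm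
  have hle : S.val ≤ RHS.roots := by
    rw [Multiset.le_iff_count]
    intro a
    by_cases ha : a ∈ S
    · have h1 : S.val.count a = 1 := Multiset.count_eq_one_of_mem S.nodup ha
      rw [h1]
      refine Multiset.one_le_count_iff_mem.mpr ?_
      refine (Polynomial.mem_roots hRHSmonic.ne_zero).mpr ?_
      obtain ⟨k, hk, rfl⟩ := Finset.mem_image.mp ha
      exact hroot k hk
    · rw [Multiset.count_eq_zero_of_notMem (by exact_mod_cast ha)]
      exact Nat.zero_le _
  have hdvd : (∏ a ∈ S, (X - C a)) ∣ RHS := by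
    calc (∏ a ∈ S, (X - C a)) = (S.val.map fun a => X - C a).prod :=
          Finset.prod_eq_multiset_prod _ _
    _ ∣ (RHS.roots.map fun a => X - C a).prod :=
          Multiset.prod_dvd_prod_of_le (Multiset.map_le_map hle)
    _ ∣ RHS := prod_multiset_X_sub_C_dvd _
  -- degrees
  have hLHSmonic : (∏ a ∈ S, (X - C a)).Monic :=
    monic_prod_of_monic _ _ fun a _ => monic_X_sub_C a
  have hcard : S.card = m + 1 := by
    rw [hS, Finset.card_image_of_injOn (fun x hx y hy => hinj x hx y hy), Finset.card_range]
  have hLdeg : (∏ a ∈ S, (X - C a)).natDegree = m + 1 := by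
    rw [natDegree_prod _ _ (fun a _ => X_sub_C_ne_zero a)]
    simp [natDegree_X_sub_C, hcard]
  have hRdeg : RHS.natDegree = m + 1 := by
    have hdegsum : RHS.natDegree = ∑ d ∈ n.divisors, (psiR d).natDegree :=
      natDegree_prod _ _ (fun d hd => (psiR_monic d (Nat.pos_of_mem_divisors hd).ne').ne_zero)
    have hsplit : n.divisors = insert 1 (n.divisors.erase 1) :=
      (Finset.insert_erase (Nat.one_mem_divisors.mpr hn0)).symm
    have h2 : 2 * ∑ d ∈ n.divisors, (psiR d).natDegree = 2 * (m+1) := by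
      rw [Finset.mul_sum, hsplit, Finset.sum_insert (Finset.notMem_erase _ _)]
      have hrest : ∑ d ∈ n.divisors.erase 1, 2 * (psiR d).natDegree
          = ∑ d ∈ n.divisors.erase 1, Nat.totient d := by
        refine Finset.sum_congr rfl fun d hd => ?_
        have hd1 : d ≠ 1 := Finset.ne_of_mem_erase hd
        have hddvd : d ∣ n := (Nat.mem_divisors.mp (Finset.mem_of_mem_erase hd)).1
        have hd0 : d ≠ 0 := by rintro rfl; exact hn0 (Nat.eq_zero_of_zero_dvd hddvd)
        have hd2 : d ≠ 2 := by
          rintro rfl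
          obtain ⟨c, hc⟩ := hddvd
          omega
        exact psiR_natDegree d (by omega)
      rw [hrest, psiR_one_natDegree]
      have htot : ∑ d ∈ n.divisors.erase 1, Nat.totient d = n - 1 := by
        have hs := Nat.sum_totient n
        rw [hsplit, Finset.sum_insert (Finset.notMem_erase _ _), Nat.totient_one] at hs
        omega
      rw [htot]
      omega
    rw [hdegsum]
    omega
  rw [hLHS]
  exact (eq_of_monic_of_dvd_of_natDegree_le hLHSmonic hRHSmonic hdvd (by omega)).symm

end
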